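/- Generalized McIver–Morgan rule: let f be a bounded expectation and let I be a bounded expectation with I ⪯ Φ_f(I) (a subinvariant w.r.t. f). Then there exist ε > 0 and a bounded expectation g such that ε·I ⪯ lfp Φ_g if and only if I ⪯ lfp Φ_f. -/

import Mathlib

open MeasureTheory Filter Topology
open scoped Classical ENNReal ENat NNReal

/-! Loop model: states `S`, guard `φ : Set S`, loop-body transition probabilities
`μ : S → S → ℝ≥0`. Expectations are functions `S → ℝ≥0∞` with the pointwise order. -/

variable {S : Type*}

/-- One-step weakest preexpectation of the loop body:
`wpF μ X s = ∑_{s'} μ s s' * X s'`. -/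
noncomputable def wpF (μ : S → S → ℝ≥0) (X : S → ℝ≥0∞) (s : S) : ℝ≥0∞ :=
  ∑' s', (μ s s' : ℝ≥0∞) * X s'

/-- The characteristic function `Φ_f` of the loop `while φ do C` with respect to the
postexpectation `f`. -/
noncomputable def Phi (φ : Set S) (μ : S → S → ℝ≥0) (f : S → ℝ≥0∞)
    (X : S → ℝ≥0∞) (s : S) : ℝ≥0∞ :=
  if s ∈ φ then wpF μ X s else f s

theorem Phi_mono (φ : Set S) (μ : S → S → ℝ≥0) (f : S → ℝ≥0∞) :
    Monotone (Phi φ μ f) := by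
  intro X Y h s
  unfold Phi wpF
  split_ifs with hs
  · exact ENNReal.tsum_le_tsum fun s' => mul_le_mul_right (h s') _
  · exact le_rfl

/-- Least fixed point of the characteristic function `Φ_f`,
i.e. the weakest preexpectation `wp(while φ do C)(f)`. -/
noncomputable def lfpPhi (φ : Set S) (μ : S → S → ℝ≥0) (f : S → ℝ≥0∞) : S → ℝ≥0∞ :=
  OrderHom.lfp ⟨Phi φ μ f, Phi_mono φ μ f⟩

/-- A finite expectation: `X s < ∞` for all states. -/
def FinExp (X : S → ℝ≥0∞) : Prop := ∀ s, X s < ⊤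

/-- A bounded expectation: `X s ≤ c` for some constant `c : ℝ≥0`. -/
def BddExp (X : S → ℝ≥0∞) : Prop := ∃ c : ℝ≥0, ∀ s, X s ≤ (c : ℝ≥0∞)

/-- `I` harmonizes with `f` if `I` agrees with `f` on all terminal states (states
outside the guard). -/
def Harmonizes (φ : Set S) (I f : S → ℝ≥0∞) : Prop := ∀ s ∉ φ, I s = f s

/-- `ΔI`: the expected change of `I` within one loop iteration. -/
noncomputable def dExp (φ : Set S) (μ : S → S → ℝ≥0) (I : S → ℝ≥0∞) (s : S) : ℝ≥0∞ :=
  if s ∈ φ then ∑' s', (μ s s' : ℝ≥0∞) * ((I s' - I s) ⊔ (I s - I s')) else 0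

/-- `I` is conditionally difference bounded if `ΔI` is bounded by a constant. -/
def CondDiffBdd (φ : Set S) (μ : S → S → ℝ≥0) (I : S → ℝ≥0∞) : Prop :=
  ∃ c : ℝ≥0, ∀ s, dExp φ μ I s ≤ (c : ℝ≥0∞)

/-! The loop space `Ω := ℕ → S` with its product σ-algebra (`S` discrete). -/

/-- The cylinder set of a finite sequence of states. -/
def Cyl (π : List S) : Set (ℕ → S) := {ϑ | ∀ i : Fin π.length, ϑ i = π.get i}

/-- The σ-algebra `F_n`, generated by the cylinder sets of sequences of length `n+1`. -/
def Fn (n : ℕ) : MeasurableSpace (ℕ → S) :=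
  MeasurableSpace.generateFrom {A | ∃ π : List S, π.length = n + 1 ∧ A = Cyl π}

/-- The shifted filtration `G_n := F_{n+1}`. -/
def Gn (n : ℕ) : MeasurableSpace (ℕ → S) := Fn (n + 1)

/-- One-step transition probability of the loop: from a state `a` inside the guard move
according to `μ`; a state outside the guard is absorbing. -/
noncomputable def stepP (φ : Set S) (μ : S → S → ℝ≥0) (a b : S) : ℝ≥0 :=
  if a ∈ φ then μ a b else if b = a then 1 else 0

/-- Product of the one-step transition probabilities along a finite sequence. -/
noncomputable def chainP (φ : Set S) (μ : S → S → ℝ≥0) : List S → ℝ≥0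
  | [] => 1
  | [_] => 1
  | a :: b :: rest => stepP φ μ a b * chainP φ μ (b :: rest)

/-- The prefix probability `p_s(π)` of the finite sequence `π` of states, starting the
loop in the state `s`. -/
noncomputable def prefP (φ : Set S) (μ : S → S → ℝ≥0) (s : S) (π : List S) : ℝ≥0 :=
  (if π.head? = some s then 1 else 0) * chainP φ μ π

/-- The looping time `τ`: the first time the run leaves the guard. -/
noncomputable def loopT (φ : Set S) (ϑ : ℕ → S) : ℕ∞ :=
  sInf {n : ℕ∞ | ∃ m : ℕ, n = (m : ℕ∞) ∧ ϑ m ∉ φ}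

/-- The stochastic process `X_n^{f,I}` induced by the invariant `I` (w.r.t. the
postexpectation `f`). -/
noncomputable def Xn (φ : Set S) (f I : S → ℝ≥0∞) (n : ℕ) (ϑ : ℕ → S) : ℝ≥0∞ :=
  if loopT φ ϑ ≤ (n : ℕ∞) then f (ϑ (loopT φ ϑ).toNat) else I (ϑ (n + 1))

/-- The stopped process `X_τ^f`. -/
noncomputable def Xstop (φ : Set S) (f : S → ℝ≥0∞) (ϑ : ℕ → S) : ℝ≥0∞ :=
  if loopT φ ϑ < ⊤ then f (ϑ (loopT φ ϑ).toNat) else 0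

section Aux

variable {S : Type*}

lemma wpF_add (μ : S → S → ℝ≥0) (X Y : S → ℝ≥0∞) (s : S) :
    wpF μ (fun t => X t + Y t) s = wpF μ X s + wpF μ Y s := by
  unfold wpF
  rw [← ENNReal.tsum_add]
  exact tsum_congr fun s' => mul_add _ _ _

lemma wpF_const_mul (μ : S → S → ℝ≥0) (c : ℝ≥0∞) (X : S → ℝ≥0∞) (s : S) :
    wpF μ (fun t => c * X t) s = c * wpF μ X s := by
  unfold wpF
  rw [← ENNReal.tsum_mul_left]
  exact tsum_congr fun s' => by ring

lemma Phi_affine (φ : Set S) (μ : S → S → ℝ≥0) (f X Y : S → ℝ≥0∞) :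
    Phi φ μ f (fun t => X t + Y t) =
      fun s => Phi φ μ f X s + Phi φ μ (fun _ => 0) Y s := by
  funext s
  unfold Phi
  split_ifs with hs
  · exact wpF_add μ X Y s
  · simp

lemma Phi_iter_affine (φ : Set S) (μ : S → S → ℝ≥0) (f X Y : S → ℝ≥0∞) (n : ℕ) :
    (Phi φ μ f)^[n] (fun t => X t + Y t) =
      fun s => (Phi φ μ f)^[n] X s + (Phi φ μ (fun _ => 0))^[n] Y s := by
  induction n with
  | zero => rfl
  | succ n ih =>
    rw [Function.iterate_succ_apply', Function.iterate_succ_apply',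
      Function.iterate_succ_apply', ih, Phi_affine]

lemma Phi0_iter_const_mul (φ : Set S) (μ : S → S → ℝ≥0) (c : ℝ≥0∞) (X : S → ℝ≥0∞) (n : ℕ) :
    (Phi φ μ (fun _ => 0))^[n] (fun t => c * X t) =
      fun s => c * (Phi φ μ (fun _ => 0))^[n] X s := by
  induction n with
  | zero => rfl
  | succ n ih =>
    rw [Function.iterate_succ_apply', Function.iterate_succ_apply', ih]
    funext s
    unfold Phi
    split_ifs with hs
    · exact wpF_const_mul μ c _ s
    · simp

lemma lfpPhi_fixed (φ : Set S) (μ : S → S → ℝ≥0) (f : S → ℝ≥0∞) :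
    Phi φ μ f (lfpPhi φ μ f) = lfpPhi φ μ f :=
  OrderHom.map_lfp (⟨Phi φ μ f, Phi_mono φ μ f⟩ : (S → ℝ≥0∞) →o (S → ℝ≥0∞))

lemma Phi_iter_le_lfp (φ : Set S) (μ : S → S → ℝ≥0) (f X : S → ℝ≥0∞)
    (hX : X ≤ lfpPhi φ μ f) (n : ℕ) : (Phi φ μ f)^[n] X ≤ lfpPhi φ μ f := by
  induction n with
  | zero => exact hX
  | succ n ih =>
    rw [Function.iterate_succ_apply']
    calc Phi φ μ f ((Phi φ μ f)^[n] X) ≤ Phi φ μ f (lfpPhi φ μ f) := Phi_mono φ μ f ih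
    _ = lfpPhi φ μ f := lfpPhi_fixed φ μ f

lemma lfpPhi_iter_eq (φ : Set S) (μ : S → S → ℝ≥0) (f : S → ℝ≥0∞) (n : ℕ) :
    (Phi φ μ f)^[n] (lfpPhi φ μ f) = lfpPhi φ μ f := by
  induction n with
  | zero => rfl
  | succ n ih => rw [Function.iterate_succ_apply', ih, lfpPhi_fixed]

lemma lfpPhi_le_const (φ : Set S) (μ : S → S → ℝ≥0) (hμ : ∀ s, ∑' s', μ s s' = 1)
    (g : S → ℝ≥0∞) (c : ℝ≥0) (hg : ∀ s, g s ≤ (c : ℝ≥0∞)) :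
    ∀ s, lfpPhi φ μ g s ≤ (c : ℝ≥0∞) := by
  have h : Phi φ μ g (fun _ => (c : ℝ≥0∞)) ≤ fun _ => (c : ℝ≥0∞) := by
    intro s
    unfold Phi wpF
    split_ifs with hs
    · have hsum : Summable (μ s) := by
        by_contra hns
        have h1 := hμ s
        rw [tsum_eq_zero_of_not_summable hns] at h1
        exact one_ne_zero h1.symm
      rw [ENNReal.tsum_mul_right, ← ENNReal.coe_tsum hsum, hμ s]
      simp
    · exact hg s
  intro s
  exact OrderHom.lfp_le (⟨Phi φ μ g, Phi_mono φ μ g⟩ : (S → ℝ≥0∞) →o (S → ℝ≥0∞)) h s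

/-- Kleene: the lfp is at most the sup of the iterates from ⊥. -/
lemma lfpPhi_le_iSup_iter (φ : Set S) (μ : S → S → ℝ≥0) (g : S → ℝ≥0∞) :
    lfpPhi φ μ g ≤ fun s => ⨆ n, (Phi φ μ g)^[n] (fun _ => 0) s := by
  set a : ℕ → S → ℝ≥0∞ := fun n => (Phi φ μ g)^[n] (fun _ => 0) with ha
  have hmono : ∀ n, a n ≤ a (n + 1) := by
    intro n
    induction n with
    | zero => intro s; simp [a]
    | succ n ih =>
      have : a (n+1) = Phi φ μ g (a n) := by
        simp only [a, Function.iterate_succ_apply']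
      rw [this]
      have : a (n+2) = Phi φ μ g (a (n+1)) := by
        simp only [a, Function.iterate_succ_apply']
      rw [this]
      exact Phi_mono φ μ g ih
  have hmono' : Monotone a := monotone_nat_of_le_succ hmono
  refine OrderHom.lfp_le (⟨Phi φ μ g, Phi_mono φ μ g⟩ : (S → ℝ≥0∞) →o (S → ℝ≥0∞)) ?_
  intro s
  show Phi φ μ g (fun t => ⨆ n, a n t) s ≤ ⨆ n, a n s
  unfold Phi
  split_ifs with hs
  · -- wpF μ (sup) s ≤ sup over n of wpF μ (a n) s ≤ sup a (n+1) s
    have key : wpF μ (fun t => ⨆ n, a n t) s ≤ ⨆ n, wpF μ (a n) s := by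
      unfold wpF
      calc ∑' s', (μ s s' : ℝ≥0∞) * ⨆ n, a n s'
          = ∑' s', ⨆ n, (μ s s' : ℝ≥0∞) * a n s' := by
            exact tsum_congr fun s' => ENNReal.mul_iSup _ fun n => a n s' 
        _ = ⨆ F : Finset S, ∑ s' ∈ F, ⨆ n, (μ s s' : ℝ≥0∞) * a n s' :=
            ENNReal.tsum_eq_iSup_sum
        _ = ⨆ F : Finset S, ⨆ n, ∑ s' ∈ F, (μ s s' : ℝ≥0∞) * a n s' := by
            refine iSup_congr fun F => ?_
            exact ENNReal.finsetSum_iSup_of_monotone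
              (fun s' => fun m k hmk => mul_le_mul_right (hmono' hmk s') _)
        _ ≤ ⨆ n, ∑' s', (μ s s' : ℝ≥0∞) * a n s' := by
            refine iSup_le fun F => iSup_le fun n => le_iSup_of_le n ?_
            exact ENNReal.sum_le_tsum F
    refine key.trans (iSup_le fun n => le_iSup_of_le (n + 1) ?_)
    have : a (n+1) = Phi φ μ g (a n) := by
      simp only [a, Function.iterate_succ_apply']
    rw [this]
    simp only [Phi, if_pos hs, le_refl]
  · exact le_iSup_of_le 1 (by simp [a, Phi, if_neg hs])

end Aux

/-- **Generalized McIver–Morgan rule.** For bounded `f` and a bounded subinvariant `I`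
w.r.t. `f`: there exist `ε > 0` and a bounded expectation `g` with
`ε·I ⪯ lfp Φ_g` if and only if `I ⪯ lfp Φ_f`. -/
theorem generalized_mciver_morgan {S : Type*} [Countable S]
    (φ : Set S) (μ : S → S → ℝ≥0) (hμ : ∀ s, ∑' s', μ s s' = 1)
    (f I : S → ℝ≥0∞) (hf : BddExp f) (hI : BddExp I) (hsub : I ≤ Phi φ μ f I) :
    (∃ ε : ℝ≥0, 0 < ε ∧ ∃ g : S → ℝ≥0∞, BddExp g ∧
        (fun s => (ε : ℝ≥0∞) * I s) ≤ lfpPhi φ μ g)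
      ↔ I ≤ lfpPhi φ μ f := by
  constructor
  · -- hard direction
    rintro ⟨ε, hε, g, ⟨cg, hcg⟩, hεI⟩ 
    set W : S → ℝ≥0∞ := lfpPhi φ μ g with hW
    have hWbdd : ∀ s, W s ≤ (cg : ℝ≥0∞) := lfpPhi_le_const φ μ hμ g cg hcg
    have hWlt : ∀ s, W s ≠ ⊤ := fun s => (lt_of_le_of_lt (hWbdd s) (by simp)).ne
    set a : ℕ → S → ℝ≥0∞ := fun n => (Phi φ μ g)^[n] (fun _ => 0) with ha
    -- W decomposition : W = a n + (Phi 0)^[n] W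
    have hdecomp : ∀ n s, W s = a n s + (Phi φ μ (fun _ => 0))^[n] W s := by
      intro n s
      have h1 : (Phi φ μ g)^[n] W = W := lfpPhi_iter_eq φ μ g n
      have h2 : (fun t => (0:ℝ≥0∞) + W t) = W := by funext t; simp
      have h3 := Phi_iter_affine φ μ g (fun _ => 0) W n
      rw [h2] at h3
      conv_lhs => rw [← h1, h3]
    have halelfp : ∀ n, a n ≤ W := fun n => Phi_iter_le_lfp φ μ g _ (by intro s; simp) n
    have haltt : ∀ n s, a n s ≠ ⊤ := fun n s => (lt_of_le_of_lt (le_trans (halelfp n s) (hWbdd s)) (by simp)).ne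
    -- I ≤ (Phi f)^[n] 0 + (Phi 0)^[n] I
    have hImain : ∀ n, I ≤ fun s => (Phi φ μ f)^[n] (fun _ => 0) s + (Phi φ μ (fun _ => 0))^[n] I s := by
      intro n
      have hIiter : I ≤ (Phi φ μ f)^[n] I := by
        induction n with
        | zero => exact le_rfl
        | succ n ih =>
          rw [Function.iterate_succ_apply']
          exact le_trans hsub (Phi_mono φ μ f ih)
      have h2 : (fun t => (0:ℝ≥0∞) + I t) = I := by funext t; simp
      have h3 := Phi_iter_affine φ μ f (fun _ => 0) I n
      rw [h2] at h3
      calc I ≤ (Phi φ μ f)^[n] I := hIiter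
        _ = _ := h3
    -- I ≤ ε⁻¹ * W
    have hIW : ∀ s, I s ≤ (ε : ℝ≥0∞)⁻¹ * W s := by
      intro s
      have h1 : (ε : ℝ≥0∞) * I s ≤ W s := hεI s
      calc I s = (ε : ℝ≥0∞)⁻¹ * ((ε : ℝ≥0∞) * I s) := by
            rw [← mul_assoc, ENNReal.inv_mul_cancel (by exact_mod_cast hε.ne') (by simp), one_mul]
        _ ≤ (ε : ℝ≥0∞)⁻¹ * W s := mul_le_mul_right h1 _
    -- Phi0 iterate comparison
    have hPhi0 : ∀ n s, (Phi φ μ (fun _ => 0))^[n] I s ≤ (ε : ℝ≥0∞)⁻¹ * (W s - a n s) := by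
      intro n s
      have hmonoiter : Monotone ((Phi φ μ (fun _ => 0) : (S → ℝ≥0∞) → S → ℝ≥0∞))^[n] :=
        (Phi_mono φ μ (fun _ => 0)).iterate n
      have h1 : (Phi φ μ (fun _ => 0))^[n] I ≤
          (Phi φ μ (fun _ => 0))^[n] (fun t => (ε : ℝ≥0∞)⁻¹ * W t) :=
        hmonoiter (fun t => hIW t)
      have h2 := Phi0_iter_const_mul φ μ ((ε : ℝ≥0∞)⁻¹) W n
      have h3 : (Phi φ μ (fun _ => 0))^[n] W s = W s - a n s := by
        have := hdecomp n s
        rw [this, ENNReal.add_sub_cancel_left (haltt n s)]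
      calc (Phi φ μ (fun _ => 0))^[n] I s
          ≤ (Phi φ μ (fun _ => 0))^[n] (fun t => (ε : ℝ≥0∞)⁻¹ * W t) s := h1 s
        _ = (ε : ℝ≥0∞)⁻¹ * (Phi φ μ (fun _ => 0))^[n] W s := by rw [h2]
        _ = (ε : ℝ≥0∞)⁻¹ * (W s - a n s) := by rw [h3]
    -- sup of a n equals W
    have hsup : ∀ s, W s = ⨆ n, a n s := by
      intro s
      refine le_antisymm (lfpPhi_le_iSup_iter φ μ g s) (iSup_le fun n => halelfp n s)
    -- conclude
    intro s
    have hlfpbdd : ∀ t, lfpPhi φ μ f t ≤ (hf.choose : ℝ≥0∞) := 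
      lfpPhi_le_const φ μ hμ f hf.choose hf.choose_spec
    refine ENNReal.le_of_forall_pos_le_add fun δ hδ hfin => ?_
    -- choose n with W s ≤ a n s + ε * δ
    have hεδ : (0:ℝ≥0∞) < (ε : ℝ≥0∞) * δ :=
      ENNReal.mul_pos (by exact_mod_cast hε.ne') (by exact_mod_cast hδ.ne')
    obtain ⟨n, hn⟩ : ∃ n, W s ≤ a n s + (ε : ℝ≥0∞) * δ := by
      by_cases h0 : W s ≤ (ε : ℝ≥0∞) * δ
      · exact ⟨0, le_trans h0 (by simp)⟩
      · push_neg at h0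
        have hWpos : W s ≠ 0 := by
          intro h
          rw [h] at h0
          exact absurd h0 (not_lt.mpr hεδ.le)
        have hlt : W s - (ε : ℝ≥0∞) * δ < ⨆ n, a n s :=
          (hsup s) ▸ ENNReal.sub_lt_self (hWlt s) hWpos hεδ.ne'
        obtain ⟨n, hn⟩ := lt_iSup_iff.mp hlt
        exact ⟨n, tsub_le_iff_right.mp hn.le⟩
    have hsub' : W s - a n s ≤ (ε : ℝ≥0∞) * δ :=
      tsub_le_iff_right.mpr (by rw [add_comm]; exact hn)
    have hterm : (ε : ℝ≥0∞)⁻¹ * (W s - a n s) ≤ (δ : ℝ≥0∞) := by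
      calc (ε : ℝ≥0∞)⁻¹ * (W s - a n s) ≤ (ε : ℝ≥0∞)⁻¹ * ((ε : ℝ≥0∞) * δ) :=
            mul_le_mul_right hsub' _
        _ = δ := by
            rw [← mul_assoc, ENNReal.inv_mul_cancel (by exact_mod_cast hε.ne') (by simp), one_mul]
    calc I s ≤ (Phi φ μ f)^[n] (fun _ => 0) s + (Phi φ μ (fun _ => 0))^[n] I s := hImain n s
      _ ≤ lfpPhi φ μ f s + (ε : ℝ≥0∞)⁻¹ * (W s - a n s) :=
          add_le_add (Phi_iter_le_lfp φ μ f _ (by intro t; simp) n s) (hPhi0 n s)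
      _ ≤ lfpPhi φ μ f s + δ := add_le_add_right hterm _
  · -- easy direction
    intro h
    exact ⟨1, one_pos, f, hf, fun s => by simpa using h s⟩
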